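/- Let R = 𝔽₂[ℤ³] be the group algebra over 𝔽₂ of ℤ³, with augmentation homomorphism ε : R → 𝔽₂ sending each T_i to 1, and let K be the field of fractions of R. Let C be a finite free R-module and ∂ : C → C an R-linear map with ∂ ∘ ∂ = 0. Then dim_{𝔽₂} ( ker(∂̄)/range(∂̄) ) ≥ dim_K ( ker(∂_K)/range(∂_K) ), where ∂̄ is the base change of ∂ to C ⊗_{R,ε} 𝔽₂ and ∂_K is the base change of ∂ to C ⊗_R K. -/

import Mathlib

/-- The group algebra `R = 𝔽₂[ℤ³]`. -/
abbrev GroupAlgZ3 : Type := AddMonoidAlgebra (ZMod 2) (Fin 3 → ℤ)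

instance : IsDomain GroupAlgZ3 := NoZeroDivisors.to_isDomain _

/-- The augmentation homomorphism `ε : 𝔽₂[ℤ³] → 𝔽₂` sending every group
element (in particular each `T_i`) to `1`. -/
noncomputable def augEps : GroupAlgZ3 →ₐ[ZMod 2] ZMod 2 :=
  AddMonoidAlgebra.lift (ZMod 2) (ZMod 2) (Fin 3 → ℤ) 1

/-- `𝔽₂` as an `𝔽₂[ℤ³]`-algebra via the augmentation `ε`. -/
noncomputable instance : Algebra GroupAlgZ3 (ZMod 2) :=
  (augEps : GroupAlgZ3 →+* ZMod 2).toAlgebra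

/-- The homology of a differential module `(C, ∂)`: `ker ∂` modulo `range ∂`
(pulled back to a submodule of `ker ∂`). -/
noncomputable def homologyOf {S C : Type*} [CommRing S] [AddCommGroup C] [Module S C]
    (d : C →ₗ[S] C) : Type _ :=
  (LinearMap.ker d) ⧸ ((LinearMap.range d).comap (LinearMap.ker d).subtype)

noncomputable instance {S C : Type*} [CommRing S] [AddCommGroup C] [Module S C]
    (d : C →ₗ[S] C) : AddCommGroup (homologyOf d) :=
  inferInstanceAs (AddCommGroup
    ((LinearMap.ker d) ⧸ ((LinearMap.range d).comap (LinearMap.ker d).subtype)))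

noncomputable instance {S C : Type*} [CommRing S] [AddCommGroup C] [Module S C]
    (d : C →ₗ[S] C) : Module S (homologyOf d) :=
  inferInstanceAs (Module S
    ((LinearMap.ker d) ⧸ ((LinearMap.range d).comap (LinearMap.ker d).subtype)))

/-! ### Auxiliary lemmas -/

open Module LinearMap Matrix

section MatrixRank

variable {F : Type*} [Field F] {ι κ : Type*} [Fintype ι] [Fintype κ]
  [DecidableEq ι] [DecidableEq κ]

/-- Rank of an arbitrary submatrix is at most the rank of the matrix. -/
lemma aux_rank_submatrix_le (A : Matrix ι κ F) {k : ℕ} (f : Fin k → ι) (g : Fin k → κ) :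
    (A.submatrix f g).rank ≤ A.rank := by
  have h1 : A.submatrix _root_.id g = A * (1 : Matrix κ κ F).submatrix (Equiv.refl κ) g := by
    rw [Matrix.mul_submatrix_one]
    rfl
  have h2 : A.submatrix f g
      = ((1 : Matrix ι ι F).submatrix f (Equiv.refl ι)) * (A.submatrix _root_.id g) := by
    rw [Matrix.one_submatrix_mul]
    rfl
  calc (A.submatrix f g).rank
      ≤ (A.submatrix _root_.id g).rank := by rw [h2]; exact Matrix.rank_mul_le_right _ _
    _ ≤ A.rank := by rw [h1]; exact Matrix.rank_mul_le_left _ _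

/-- A square matrix over a field of full rank has nonzero determinant. -/
lemma aux_det_ne_zero_of_rank {k : ℕ} (S : Matrix (Fin k) (Fin k) F) (h : S.rank = k) :
    S.det ≠ 0 := by
  intro h0
  obtain ⟨v, hv, hv0⟩ := (Matrix.exists_mulVec_eq_zero_iff).2 h0
  have hker : v ∈ LinearMap.ker S.mulVecLin := by
    simpa [Matrix.mulVecLin] using hv0
  have hkbot : LinearMap.ker S.mulVecLin ≠ ⊥ := by
    intro hb
    rw [hb] at hker
    exact hv (by simpa using hker)
  have hpos : Module.finrank F (LinearMap.ker S.mulVecLin) ≠ 0 := by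
    intro hz
    exact hkbot (Submodule.finrank_eq_zero.mp hz)
  have := LinearMap.finrank_range_add_finrank_ker S.mulVecLin
  rw [show Module.finrank F (LinearMap.range S.mulVecLin) = S.rank from rfl] at this
  rw [h] at this
  have hcard : Module.finrank F (Fin k → F) = k := by simp
  omega

/-- From a matrix of rank `k`, one can extract `k` columns which are linearly
independent. -/
lemma aux_exists_cols {k : ℕ} (N : Matrix ι κ F) (h : N.rank = k) :
    ∃ g : Fin k → κ, LinearIndependent F (fun i => Nᵀ (g i)) := by
  obtain ⟨t, hts, hspan, hli⟩ := exists_linearIndependent F (Set.range Nᵀ)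
  have htfin : t.Finite := hli.setFinite
  haveI := htfin.fintype
  have hcard : Fintype.card t = k := by
    have h1 := linearIndependent_iff_card_eq_finrank_span.mp hli
    rw [h1]
    have : Subtype.val '' (Set.univ : Set t) = t := by simp
    rw [Set.finrank, Subtype.range_coe, hspan]
    rw [Matrix.rank_eq_finrank_span_cols] at h
    exact h
  obtain ⟨e⟩ : Nonempty (Fin k ≃ t) := by
    rw [← Fintype.card_eq]
    simp [hcard]
  choose jj hjj using fun i : Fin k => hts (e i).2
  refine ⟨jj, ?_⟩
  have : (fun i => Nᵀ (jj i)) = (fun x : t => (x : ι → F)) ∘ e := by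
    funext i
    simp [hjj i]
  rw [this]
  exact hli.comp e e.injective

/-- A matrix of rank `k` over a field has a nonzero `k × k` minor. -/
lemma aux_exists_minor {k : ℕ} (N : Matrix ι κ F) (h : N.rank = k) :
    ∃ (f : Fin k → ι) (g : Fin k → κ), (N.submatrix f g).det ≠ 0 := by
  obtain ⟨g, hg⟩ := aux_exists_cols N h
  set N₁ : Matrix (Fin k) ι F := Nᵀ.submatrix g _root_.id with hN₁
  have hN₁li : LinearIndependent F N₁ := by
    have : (fun i : Fin k => N₁ i) = fun i => Nᵀ (g i) := rfl
    rw [show (N₁ : Fin k → ι → F) = fun i => Nᵀ (g i) from rfl]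
    exact hg
  have hN₁rank : N₁.rank = k := by
    exact hN₁li.rank_matrix.trans (by simp)
  obtain ⟨f, hf⟩ := aux_exists_cols N₁ hN₁rank
  set S : Matrix (Fin k) (Fin k) F := N₁ᵀ.submatrix f _root_.id with hS
  have hSli : LinearIndependent F S := by
    rw [show (S : Fin k → Fin k → F) = fun i => N₁ᵀ (f i) from rfl]
    exact hf
  have hSrank : S.rank = k := by
    exact hSli.rank_matrix.trans (by simp)
  refine ⟨f, g, ?_⟩
  have : N.submatrix f g = S := by
    ext i j
    rfl
  rw [this]
  exact aux_det_ne_zero_of_rank S hSrank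

/-- Rank can only drop under specialization: if `ψ : R → K` is injective into a
field and `φ : R → F` is any ring hom into a field, then the rank of `φ(M)` is
at most the rank of `ψ(M)`. -/
lemma aux_rank_map_le {R : Type*} [CommRing R] {K : Type*} [Field K]
    (ψ : R →+* K) (hψ : Function.Injective ψ) (φ : R →+* F)
    (M : Matrix ι ι R) : (M.map φ).rank ≤ (M.map ψ).rank := by
  obtain ⟨f, g, hdet⟩ := aux_exists_minor (M.map φ) rfl
  rw [show (M.map φ).submatrix f g = φ.mapMatrix (M.submatrix f g) from rfl,
    ← RingHom.map_det] at hdet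
  have hMdet : (M.submatrix f g).det ≠ 0 := fun h => hdet (by rw [h, map_zero])
  have hKdet : ((M.map ψ).submatrix f g).det ≠ 0 := by
    rw [show (M.map ψ).submatrix f g = ψ.mapMatrix (M.submatrix f g) from rfl,
      ← RingHom.map_det]
    intro h
    exact hMdet (hψ (by rw [h, map_zero]))
  have hrank : ((M.map ψ).submatrix f g).rank = (M.map φ).rank := by
    have hu : IsUnit ((M.map ψ).submatrix f g) :=
      (Matrix.isUnit_iff_isUnit_det _).mpr (isUnit_iff_ne_zero.mpr hKdet)
    rw [Matrix.rank_of_isUnit _ hu]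
    simp
  calc (M.map φ).rank = ((M.map ψ).submatrix f g).rank := hrank.symm
    _ ≤ (M.map ψ).rank := aux_rank_submatrix_le _ _ _

end MatrixRank

/-- Dimension count for the homology of a differential on a finite-dimensional
vector space. -/
lemma aux_homology_finrank {F V : Type*} [Field F] [AddCommGroup V] [Module F V]
    [FiniteDimensional F V] (e : V →ₗ[F] V) (he : e ∘ₗ e = 0) :
    Module.finrank F (homologyOf e) + 2 * Module.finrank F (LinearMap.range e)
      = Module.finrank F V := by
  have hle : LinearMap.range e ≤ LinearMap.ker e := LinearMap.range_le_ker_iff.mpr he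
  set p := (LinearMap.range e).comap (LinearMap.ker e).subtype with hp
  have h1 : Module.finrank F (homologyOf e)
      = Module.finrank F ((LinearMap.ker e) ⧸ p) := rfl
  have h2 : Module.finrank F p = Module.finrank F (LinearMap.range e) :=
    (Submodule.comapSubtypeEquivOfLe hle).finrank_eq
  have h3 := Submodule.finrank_quotient_add_finrank p
  have h4 := LinearMap.finrank_range_add_finrank_ker e
  omega

/-- The homology dimension formula for the base change of a differential on a
finite free module, expressed via matrix ranks. -/
lemma aux_basechange_finrank {C : Type*} [AddCommGroup C] [Module GroupAlgZ3 C]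
    {ι : Type*} [Fintype ι] [DecidableEq ι] (b : Basis ι GroupAlgZ3 C)
    (d : C →ₗ[GroupAlgZ3] C) (hd : d ∘ₗ d = 0)
    (F : Type*) [Field F] [Algebra GroupAlgZ3 F] :
    Module.finrank F (homologyOf (LinearMap.baseChange F d))
      + 2 * ((LinearMap.toMatrix b b d).map (algebraMap GroupAlgZ3 F)).rank
      = Fintype.card ι := by
  set b' := Algebra.TensorProduct.basis F b with hb'
  haveI : FiniteDimensional F (TensorProduct GroupAlgZ3 F C) :=
    Module.Finite.of_basis b'
  have he : (LinearMap.baseChange F d) ∘ₗ (LinearMap.baseChange F d) = 0 := by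
    rw [← LinearMap.baseChange_comp, hd, LinearMap.baseChange_zero]
  have hmat : LinearMap.toMatrix b' b' (LinearMap.baseChange F d)
      = (LinearMap.toMatrix b b d).map (algebraMap GroupAlgZ3 F) :=
    LinearMap.toMatrix_baseChange F d b b
  have hrank : ((LinearMap.toMatrix b b d).map (algebraMap GroupAlgZ3 F)).rank
      = Module.finrank F (LinearMap.range (LinearMap.baseChange F d)) := by
    rw [← hmat]
    rw [Matrix.rank_eq_finrank_range_toLin (LinearMap.toMatrix b' b'
      (LinearMap.baseChange F d)) b' b', Matrix.toLin_toMatrix]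
  have hcard : Module.finrank F (TensorProduct GroupAlgZ3 F C) = Fintype.card ι :=
    Module.finrank_eq_card_basis b'
  rw [hrank, ← hcard]
  exact aux_homology_finrank (LinearMap.baseChange F d) he

/-- Let `C` be a finite free module over `R = 𝔽₂[ℤ³]`, with
fraction field `K`, and `∂ : C → C` an `R`-linear differential with
`∂ ∘ ∂ = 0`.  Then the `𝔽₂`-dimension of the homology of the base change of
`∂` along the augmentation `ε : R → 𝔽₂` is at least the `K`-dimension of the
homology of the base change of `∂` to `K`. -/
theorem stmt14 {C : Type*} [AddCommGroup C] [Module GroupAlgZ3 C]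
    [Module.Free GroupAlgZ3 C] [Module.Finite GroupAlgZ3 C]
    (d : C →ₗ[GroupAlgZ3] C) (hd : d ∘ₗ d = 0) :
    Module.finrank (FractionRing GroupAlgZ3)
        (homologyOf (LinearMap.baseChange (FractionRing GroupAlgZ3) d)) ≤
      Module.finrank (ZMod 2)
        (homologyOf (LinearMap.baseChange (ZMod 2) d)) := by
  classical
  let b := Module.Free.chooseBasis GroupAlgZ3 C
  have hK := aux_basechange_finrank b d hd (FractionRing GroupAlgZ3)
  have hF := aux_basechange_finrank b d hd (ZMod 2)
  have hinj : Function.Injective (algebraMap GroupAlgZ3 (FractionRing GroupAlgZ3)) :=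
    IsFractionRing.injective GroupAlgZ3 (FractionRing GroupAlgZ3)
  have hr := aux_rank_map_le (algebraMap GroupAlgZ3 (FractionRing GroupAlgZ3)) hinj
    (algebraMap GroupAlgZ3 (ZMod 2)) (LinearMap.toMatrix b b d)
  omega
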